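/- Well-posedness and unitarity of the feedback connection parametrizing GR-unitary realizations: let X, X~, E, E*, L, L' be complex Hilbert spaces. Let U_0 : X ⊕ E ⊕ L' → X ⊕ E* ⊕ L be a unitary operator with 3×3 block decomposition [U_{0,ij}] (rows indexed by X, E*, L; columns by X, E, L') whose (3,3)-block U_{0,33} : L' → L is zero, and let U~ = [[U~_{11}, U~_{12}], [U~_{21}, U~_{22}]] : X~ ⊕ L → X~ ⊕ L' be unitary. Define U : X ⊕ X~ ⊕ E → X ⊕ X~ ⊕ E* by the block matrix [[U_{0,11} + U_{0,13} U~_{22} U_{0,31}, U_{0,13} U~_{21}, U_{0,12} + U_{0,13} U~_{22} U_{0,32}], [U~_{12} U_{0,31}, U~_{11}, U~_{12} U_{0,32}], [U_{0,21} + U_{0,23} U~_{22} U_{0,31}, U_{0,23} U~_{21}, U_{0,22} + U_{0,23} U~_{22} U_{0,32}]]. Then: (i) U is unitary; (ii) for every (h, h~, e) ∈ X ⊕ X~ ⊕ E there exist unique ℓ ∈ L and ℓ' ∈ L' such that ℓ equals the L-component of U_0(h, e, ℓ') and ℓ' equals the L'-component of U~(h~, ℓ); and for these ℓ, ℓ'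 one has U(h, h~, e) = (h', h~', e*), where h' and e* are the X- and E*-components of U_0(h, e, ℓ') and h~' is the X~-component of U~(h~, ℓ). -/

import Mathlib

open ContinuousLinearMap

/-- **Well-posedness and unitarity of the feedback connection parametrizing GR-unitary
realizations.**  Let `U₀ : X ⊕ E ⊕ L' → X ⊕ E* ⊕ L` be unitary (encoded blockwise by
inner-product preservation and surjectivity) with vanishing `(3,3)`-block, and let
`U~ : X~ ⊕ L → X~ ⊕ L'` be unitary.  Then the feedback connection
`U = 𝓕(U₀, U~) : X ⊕ X~ ⊕ E → X ⊕ X~ ⊕ E*`, given by the explicit 3×3 block formula,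
is unitary, the feedback loop has a unique solution `(ℓ, ℓ')`, and `U` agrees with
the composite system determined by this solution. -/
theorem feedback_connection_unitary
    {X Xt E F L L' : Type*}
    [NormedAddCommGroup X] [InnerProductSpace ℂ X]
    [NormedAddCommGroup Xt] [InnerProductSpace ℂ Xt]
    [NormedAddCommGroup E] [InnerProductSpace ℂ E]
    [NormedAddCommGroup F] [InnerProductSpace ℂ F]
    [NormedAddCommGroup L] [InnerProductSpace ℂ L]
    [NormedAddCommGroup L'] [InnerProductSpace ℂ L']
    (U011 : X →L[ℂ] X) (U012 : E →L[ℂ] X) (U013 : L' →L[ℂ] X)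
    (U021 : X →L[ℂ] F) (U022 : E →L[ℂ] F) (U023 : L' →L[ℂ] F)
    (U031 : X →L[ℂ] L) (U032 : E →L[ℂ] L)
    -- unitarity of `U₀` (with zero `(3,3)`-block): it preserves the `ℓ²` inner product
    -- of the direct sums and is surjective
    (hU0iso : ∀ (x x' : X) (e e' : E) (l l'' : L'),
      (inner ℂ (U011 x + U012 e + U013 l) (U011 x' + U012 e' + U013 l'') : ℂ) +
        (inner ℂ (U021 x + U022 e + U023 l) (U021 x' + U022 e' + U023 l'') : ℂ) +
        (inner ℂ (U031 x + U032 e) (U031 x' + U032 e') : ℂ)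
      = (inner ℂ x x' : ℂ) + (inner ℂ e e' : ℂ) + (inner ℂ l l'' : ℂ))
    (hU0surj : ∀ (a : X) (b : F) (c : L), ∃ (x : X) (e : E) (l : L'),
      U011 x + U012 e + U013 l = a ∧ U021 x + U022 e + U023 l = b ∧ U031 x + U032 e = c)
    (Ut11 : Xt →L[ℂ] Xt) (Ut12 : L →L[ℂ] Xt) (Ut21 : Xt →L[ℂ] L') (Ut22 : L →L[ℂ] L')
    -- unitarity of `U~`
    (hUtiso : ∀ (x x' : Xt) (l l' : L),
      (inner ℂ (Ut11 x + Ut12 l) (Ut11 x' + Ut12 l') : ℂ) +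
        (inner ℂ (Ut21 x + Ut22 l) (Ut21 x' + Ut22 l') : ℂ)
      = (inner ℂ x x' : ℂ) + (inner ℂ l l' : ℂ))
    (hUtsurj : ∀ (a : Xt) (b : L'), ∃ (x : Xt) (l : L),
      Ut11 x + Ut12 l = a ∧ Ut21 x + Ut22 l = b) :
    -- (i) the feedback-connected block operator `U` is unitary:
    ((∀ (h h' : X) (ht ht' : Xt) (e e' : E),
      (inner ℂ ((U011 + U013 ∘L Ut22 ∘L U031) h + (U013 ∘L Ut21) ht +
            (U012 + U013 ∘L Ut22 ∘L U032) e)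
          ((U011 + U013 ∘L Ut22 ∘L U031) h' + (U013 ∘L Ut21) ht' +
            (U012 + U013 ∘L Ut22 ∘L U032) e') : ℂ) +
        (inner ℂ ((Ut12 ∘L U031) h + Ut11 ht + (Ut12 ∘L U032) e)
          ((Ut12 ∘L U031) h' + Ut11 ht' + (Ut12 ∘L U032) e') : ℂ) +
        (inner ℂ ((U021 + U023 ∘L Ut22 ∘L U031) h + (U023 ∘L Ut21) ht +
            (U022 + U023 ∘L Ut22 ∘L U032) e)
          ((U021 + U023 ∘L Ut22 ∘L U031) h' + (U023 ∘L Ut21) ht' +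
            (U022 + U023 ∘L Ut22 ∘L U032) e') : ℂ)
      = (inner ℂ h h' : ℂ) + (inner ℂ ht ht' : ℂ) + (inner ℂ e e' : ℂ)) ∧
    (∀ (a : X) (b : Xt) (c : F), ∃ (h : X) (ht : Xt) (e : E),
      (U011 + U013 ∘L Ut22 ∘L U031) h + (U013 ∘L Ut21) ht +
          (U012 + U013 ∘L Ut22 ∘L U032) e = a ∧
        (Ut12 ∘L U031) h + Ut11 ht + (Ut12 ∘L U032) e = b ∧
        (U021 + U023 ∘L Ut22 ∘L U031) h + (U023 ∘L Ut21) ht +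
          (U022 + U023 ∘L Ut22 ∘L U032) e = c)) ∧
    -- (ii) the feedback loop is well posed and `U` agrees with the composite system:
    (∀ (h : X) (ht : Xt) (e : E),
      (∃! p : L × L', p.1 = U031 h + U032 e ∧ p.2 = Ut21 ht + Ut22 p.1) ∧
      ∀ (l : L) (l' : L'), l = U031 h + U032 e → l' = Ut21 ht + Ut22 l →
        (U011 + U013 ∘L Ut22 ∘L U031) h + (U013 ∘L Ut21) ht +
            (U012 + U013 ∘L Ut22 ∘L U032) e = U011 h + U012 e + U013 l' ∧
          (Ut12 ∘L U031) h + Ut11 ht + (Ut12 ∘L U032) e = Ut11 ht + Ut12 l ∧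
          (U021 + U023 ∘L Ut22 ∘L U031) h + (U023 ∘L Ut21) ht +
            (U022 + U023 ∘L Ut22 ∘L U032) e = U021 h + U022 e + U023 l') := by
  have row1 : ∀ (h : X) (ht : Xt) (e : E),
      (U011 + U013 ∘L Ut22 ∘L U031) h + (U013 ∘L Ut21) ht +
        (U012 + U013 ∘L Ut22 ∘L U032) e
      = U011 h + U012 e + U013 (Ut21 ht + Ut22 (U031 h + U032 e)) := by
    intro h ht e
    simp only [add_apply, comp_apply, map_add]
    abel
  have row2 : ∀ (h : X) (ht : Xt) (e : E),
      (Ut12 ∘L U031) h + Ut11 ht + (Ut12 ∘L U032) e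
      = Ut11 ht + Ut12 (U031 h + U032 e) := by
    intro h ht e
    simp only [comp_apply, map_add]
    abel
  have row3 : ∀ (h : X) (ht : Xt) (e : E),
      (U021 + U023 ∘L Ut22 ∘L U031) h + (U023 ∘L Ut21) ht +
        (U022 + U023 ∘L Ut22 ∘L U032) e
      = U021 h + U022 e + U023 (Ut21 ht + Ut22 (U031 h + U032 e)) := by
    intro h ht e
    simp only [add_apply, comp_apply, map_add]
    abel
  have hker : ∀ (x : X) (e : E) (l' : L'),
      U011 x + U012 e + U013 l' = 0 → U021 x + U022 e + U023 l' = 0 → l' = 0 := by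
    intro x e l' h1 h2
    have h3 := hU0iso x x e e l' l'
    have h4 := hU0iso x x e e 0 0
    rw [h1, h2] at h3
    simp only [map_zero, add_zero, inner_zero_right, inner_zero_left, zero_add] at h3 h4
    have h5 : (inner ℂ l' l' : ℂ) = -(inner ℂ (U011 x + U012 e) (U011 x + U012 e) : ℂ)
        - (inner ℂ (U021 x + U022 e) (U021 x + U022 e) : ℂ) := by
      linear_combination h4 - h3
    rw [inner_self_eq_norm_sq_to_K, inner_self_eq_norm_sq_to_K,
      inner_self_eq_norm_sq_to_K] at h5
    have h6 : (‖l'‖ ^ 2 : ℝ) = -‖U011 x + U012 e‖ ^ 2 - ‖U021 x + U022 e‖ ^ 2 := by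
      exact_mod_cast h5
    have h7 : ‖l'‖ = 0 := by
      nlinarith [norm_nonneg l', sq_nonneg ‖U011 x + U012 e‖, sq_nonneg ‖U021 x + U022 e‖]
    exact norm_eq_zero.mp h7
  refine ⟨⟨?_, ?_⟩, ?_⟩
  · intro h h' ht ht' e e'
    rw [row1 h ht e, row1 h' ht' e', row2 h ht e, row2 h' ht' e',
      row3 h ht e, row3 h' ht' e']
    have k1 := hU0iso h h' e e' (Ut21 ht + Ut22 (U031 h + U032 e))
      (Ut21 ht' + Ut22 (U031 h' + U032 e'))
    have k2 := hUtiso ht ht' (U031 h + U032 e) (U031 h' + U032 e')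
    linear_combination k1 + k2
  · intro a b c
    obtain ⟨h0, e0, l'0, ha0, hc0, hl0⟩ := hU0surj a c 0
    obtain ⟨ht, l, hb, hl'⟩ := hUtsurj b l'0
    obtain ⟨h, e, l', ha, hc, hl⟩ := hU0surj a c l
    have hll : l' = l'0 := by
      have e1 : U011 (h - h0) + U012 (e - e0) + U013 (l' - l'0)
          = (U011 h + U012 e + U013 l') - (U011 h0 + U012 e0 + U013 l'0) := by
        simp only [map_sub]; abel
      have e2 : U021 (h - h0) + U022 (e - e0) + U023 (l' - l'0)
          = (U021 h + U022 e + U023 l') - (U021 h0 + U022 e0 + U023 l'0) := by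
        simp only [map_sub]; abel
      have := hker (h - h0) (e - e0) (l' - l'0)
        (by rw [e1, ha, ha0, sub_self]) (by rw [e2, hc, hc0, sub_self])
      exact sub_eq_zero.mp this
    refine ⟨h, ht, e, ?_, ?_, ?_⟩
    · rw [row1 h ht e, hl, hl', ← hll]; exact ha
    · rw [row2 h ht e, hl]; exact hb
    · rw [row3 h ht e, hl, hl', ← hll]; exact hc
  · intro h ht e
    refine ⟨⟨⟨U031 h + U032 e, Ut21 ht + Ut22 (U031 h + U032 e)⟩, ⟨rfl, rfl⟩, ?_⟩, ?_⟩
    · rintro ⟨l, l'⟩ ⟨h1, h2⟩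
      simp only at h1 h2
      subst h1; subst h2; rfl
    · intro l l' hl hl'
      subst hl; subst hl'
      exact ⟨row1 h ht e, row2 h ht e, row3 h ht e⟩
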